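/- Let G be a compact Hausdorff topological group with Haar probability measure μ, let N be an open normal subgroup of G, let π : G → G/N be the quotient map, and let Q₁, Q₂ be subgroups of the finite group H := G/N. Then the product measure μ × μ of the set {(x,y) ∈ G × G : π(y) ∈ Q₂ and π(x·y·x⁻¹) ∈ Q₁} equals |Q₁| · |Q₂| · Nat.card(Q₁\H/Q₂) / |H|², where Nat.card(Q₁\H/Q₂) is the number of double cosets Q₁hQ₂ in H. -/

import Mathlib

open MeasureTheory MulAction

namespace HaarDosetAux

variable {H : Type*} [Group H] (Q₁ Q₂ : Subgroup H)

instance : SMul (Q₁ × Q₂) H := ⟨fun g x => g.1 * x * (g.2 : H)⁻¹⟩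

lemma smul_def (g : Q₁ × Q₂) (x : H) : g • x = g.1 * x * (g.2 : H)⁻¹ := rfl

instance : MulAction (Q₁ × Q₂) H where
  one_smul x := by simp [smul_def]
  mul_smul g g' x := by simp [smul_def, mul_assoc]

/-- The set counted in the main theorem is equivalent to pairs (g, fixed point of g). -/
def pairEquiv :
    {p : H × H // p.2 ∈ Q₂ ∧ p.1 * p.2 * p.1⁻¹ ∈ Q₁} ≃
      Σ g : Q₁ × Q₂, fixedBy H g where
  toFun p := ⟨(⟨p.1.1 * p.1.2 * p.1.1⁻¹, p.2.2⟩, ⟨p.1.2, p.2.1⟩), p.1.1, by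
    simp [MulAction.fixedBy, smul_def]⟩
  invFun s := ⟨(s.2.1, (s.1.2 : H)), (s.1.2).2, by
    have h : (s.1.1 : H) * s.2.1 * (s.1.2 : H)⁻¹ = s.2.1 := s.2.2
    have h2 : (s.1.1 : H) * s.2.1 = (s.2.1 : H) * s.1.2 := by
      have := congrArg (· * (s.1.2 : H)) h
      simpa [mul_assoc] using this
    have : (s.2.1 : H) * (s.1.2 : H) * (s.2.1 : H)⁻¹ = (s.1.1 : H) := by
      rw [← h2]; simp [mul_assoc]
    rw [this]; exact (s.1.1).2⟩
  left_inv p := rfl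
  right_inv s := by
    obtain ⟨⟨q₁, q₂⟩, x, hx⟩ := s
    have h : (q₁ : H) * x * (q₂ : H)⁻¹ = x := hx
    have h2 : (q₁ : H) * x = x * q₂ := by
      have := congrArg (· * (q₂ : H)) h
      simpa [mul_assoc] using this
    have hq : (x : H) * q₂ * x⁻¹ = (q₁ : H) := by rw [← h2]; simp [mul_assoc]
    ext <;> simp [hq]

/-- Orbits of the `Q₁ × Q₂` action are double cosets. -/
def orbit_equiv_doset :
    orbitRel.Quotient (Q₁ × Q₂) H ≃ DoubleCoset.Quotient (Q₁ : Set H) (Q₂ : Set H) :=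
  Quotient.congrRight fun a b => by
    rw [orbitRel_apply, MulAction.mem_orbit_iff, DoubleCoset.rel_iff]
    constructor
    · rintro ⟨⟨q₁, q₂⟩, rfl⟩
      exact ⟨(q₁ : H)⁻¹, Q₁.inv_mem q₁.2, q₂, q₂.2, by rw [smul_def]; group⟩
    · rintro ⟨h, hh, k, hk, rfl⟩
      exact ⟨(⟨h⁻¹, Q₁.inv_mem hh⟩, ⟨k, hk⟩), by rw [smul_def]; group⟩

lemma card_pairs [Fintype H] :
    Nat.card {p : H × H // p.2 ∈ Q₂ ∧ p.1 * p.2 * p.1⁻¹ ∈ Q₁} =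
      Nat.card Q₁ * Nat.card Q₂ *
        Nat.card (DoubleCoset.Quotient (Q₁ : Set H) (Q₂ : Set H)) := by
  classical
  rw [Nat.card_congr (pairEquiv Q₁ Q₂)]
  letI : ∀ g : Q₁ × Q₂, Fintype (fixedBy H g) := fun g => Fintype.ofFinite _
  letI : Fintype (orbitRel.Quotient (Q₁ × Q₂) H) := Fintype.ofFinite _
  rw [Nat.card_eq_fintype_card, Fintype.card_sigma,
    MulAction.sum_card_fixedBy_eq_card_orbits_mul_card_group]
  rw [← Nat.card_eq_fintype_card, ← Nat.card_eq_fintype_card,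
    Nat.card_congr (orbit_equiv_doset Q₁ Q₂), Nat.card_prod]
  ring

end HaarDosetAux

/-- For a compact group `G` with Haar probability measure `μ`, an open normal subgroup `N`,
and subgroups `Q₁, Q₂` of the finite quotient `H = G/N`:
`(μ×μ){(x,y) : π y ∈ Q₂, π(xyx⁻¹) ∈ Q₁} = |Q₁|·|Q₂|·#(Q₁\H/Q₂) / |H|²`. -/
theorem haar_measure_double_cosets (G : Type*) [Group G] [TopologicalSpace G]
    [IsTopologicalGroup G] [CompactSpace G] [T2Space G] [MeasurableSpace G] [BorelSpace G]
    (μ : Measure G) [μ.IsHaarMeasure] [IsProbabilityMeasure μ]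
    (N : Subgroup G) [N.Normal] (hN : IsOpen (N : Set G))
    (Q₁ Q₂ : Subgroup (G ⧸ N)) :
    (μ.prod μ) {q : G × G | QuotientGroup.mk' N q.2 ∈ Q₂ ∧
        QuotientGroup.mk' N (q.1 * q.2 * q.1⁻¹) ∈ Q₁} =
      (Nat.card Q₁ : ENNReal) * (Nat.card Q₂ : ENNReal) *
          (Nat.card (DoubleCoset.Quotient (Q₁ : Set (G ⧸ N)) (Q₂ : Set (G ⧸ N))) : ENNReal) /
        (Nat.card (G ⧸ N) : ENNReal) ^ 2 := by
  classical
  have hHfin : Finite (G ⧸ N) := N.quotient_finite_of_isOpen hN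
  cases nonempty_fintype (G ⧸ N)
  set π := QuotientGroup.mk' N with hπ
  have hNmeas : MeasurableSet (N : Set G) := hN.measurableSet
  have hfiber_eq : ∀ x : G, (π ⁻¹' {π x} : Set G) = (fun y => x⁻¹ * y) ⁻¹' N := by
    intro x; ext y
    simp only [Set.mem_preimage, Set.mem_singleton_iff, SetLike.mem_coe]
    rw [hπ, QuotientGroup.mk'_apply, QuotientGroup.mk'_apply, eq_comm, QuotientGroup.eq]
  have hcard0 : (Nat.card (G ⧸ N) : ENNReal) ≠ 0 := by
    simp [Nat.card_eq_fintype_card, Fintype.card_ne_zero]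
  have hcardtop : (Nat.card (G ⧸ N) : ENNReal) ≠ ⊤ := ENNReal.natCast_ne_top _
  have hfibmeas : ∀ h : G ⧸ N, MeasurableSet (π ⁻¹' {h}) := by
    intro h
    obtain ⟨x, rfl⟩ := QuotientGroup.mk'_surjective N h
    rw [hfiber_eq x]
    exact hNmeas.preimage (measurable_const_mul x⁻¹)
  have hfiber : ∀ h : G ⧸ N, μ (π ⁻¹' {h}) = (Nat.card (G ⧸ N) : ENNReal)⁻¹ := by
    have hfibN : ∀ h : G ⧸ N, μ (π ⁻¹' {h}) = μ N := by
      intro h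
      obtain ⟨x, rfl⟩ := QuotientGroup.mk'_surjective N h
      rw [hfiber_eq x]
      exact measure_preimage_mul μ x⁻¹ N
    have huniv : (⋃ h : G ⧸ N, π ⁻¹' {h}) = Set.univ := by ext y; simp
    have hdisj : Pairwise (Function.onFun Disjoint fun h : G ⧸ N => π ⁻¹' {h}) := by
      intro a b hab
      refine Set.disjoint_left.2 fun y hy hy' => hab ?_
      simp only [Set.mem_preimage, Set.mem_singleton_iff] at hy hy'
      rw [← hy, ← hy']
    have hsum : (Nat.card (G ⧸ N) : ENNReal) * μ N = 1 := by
      have := measure_iUnion (μ := μ) hdisj hfibmeas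
      rw [huniv, measure_univ, tsum_fintype] at this
      simp only [hfibN] at this
      rw [Finset.sum_const, Finset.card_univ, nsmul_eq_mul] at this
      rw [Nat.card_eq_fintype_card]
      exact this.symm
    have hμN : μ N = (Nat.card (G ⧸ N) : ENNReal)⁻¹ := by
      rw [← one_mul (μ (N : Set G)), ← ENNReal.inv_mul_cancel hcard0 hcardtop, mul_assoc, hsum,
        mul_one]
    intro h; rw [hfibN h, hμN]
  -- decompose the set as a finite union of product fibers
  set S : Finset ((G ⧸ N) × (G ⧸ N)) :=
    Finset.univ.filter (fun p => p.2 ∈ Q₂ ∧ p.1 * p.2 * p.1⁻¹ ∈ Q₁) with hS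
  have hset : {q : G × G | π q.2 ∈ Q₂ ∧ π (q.1 * q.2 * q.1⁻¹) ∈ Q₁} =
      ⋃ p ∈ S, (π ⁻¹' {p.1}) ×ˢ (π ⁻¹' {p.2}) := by
    ext q
    simp only [Set.mem_setOf_eq, Set.mem_iUnion, Set.mem_prod, Set.mem_preimage,
      Set.mem_singleton_iff, hS, Finset.mem_filter, Finset.mem_univ, true_and]
    constructor
    · rintro ⟨h2, h1⟩
      refine ⟨(π q.1, π q.2), ⟨h2, ?_⟩, rfl, rfl⟩
      simpa [map_mul, map_inv] using h1
    · rintro ⟨p, ⟨h2, h1⟩, e1, e2⟩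
      refine ⟨by rw [e2]; exact h2, ?_⟩
      simpa [map_mul, map_inv, e1, e2] using h1
  have hdisj' : (S : Set ((G ⧸ N) × (G ⧸ N))).Pairwise
      (Function.onFun Disjoint fun p => (π ⁻¹' {p.1}) ×ˢ (π ⁻¹' {p.2})) := by
    intro a _ b _ hab
    refine Set.disjoint_left.2 fun q hq hq' => hab ?_
    obtain ⟨ha1, ha2⟩ := hq
    obtain ⟨hb1, hb2⟩ := hq'
    simp only [Set.mem_preimage, Set.mem_singleton_iff] at ha1 ha2 hb1 hb2
    exact Prod.ext (ha1 ▸ hb1.symm ▸ rfl) (ha2 ▸ hb2.symm ▸ rfl)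
  have hmeas' : ∀ p ∈ S, MeasurableSet ((π ⁻¹' {p.1}) ×ˢ (π ⁻¹' {p.2})) :=
    fun p _ => (hfibmeas p.1).prod (hfibmeas p.2)
  have hScard : S.card = Nat.card Q₁ * Nat.card Q₂ *
      Nat.card (DoubleCoset.Quotient (Q₁ : Set (G ⧸ N)) (Q₂ : Set (G ⧸ N))) := by
    rw [← HaarDosetAux.card_pairs Q₁ Q₂, Nat.card_eq_fintype_card, Fintype.card_subtype, hS]
  calc (μ.prod μ) {q : G × G | π q.2 ∈ Q₂ ∧ π (q.1 * q.2 * q.1⁻¹) ∈ Q₁}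
      = ∑ p ∈ S, (μ.prod μ) ((π ⁻¹' {p.1}) ×ˢ (π ⁻¹' {p.2})) := by
        rw [hset]; exact measure_biUnion_finset hdisj' hmeas'
    _ = ∑ p ∈ S, (Nat.card (G ⧸ N) : ENNReal)⁻¹ * (Nat.card (G ⧸ N) : ENNReal)⁻¹ := by
        refine Finset.sum_congr rfl fun p _ => ?_
        rw [Measure.prod_prod, hfiber p.1, hfiber p.2]
    _ = (S.card : ENNReal) * ((Nat.card (G ⧸ N) : ENNReal)⁻¹ *
          (Nat.card (G ⧸ N) : ENNReal)⁻¹) := by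
        rw [Finset.sum_const, nsmul_eq_mul]
    _ = (Nat.card Q₁ : ENNReal) * (Nat.card Q₂ : ENNReal) *
          (Nat.card (DoubleCoset.Quotient (Q₁ : Set (G ⧸ N)) (Q₂ : Set (G ⧸ N))) : ENNReal) /
        (Nat.card (G ⧸ N) : ENNReal) ^ 2 := by
        rw [hScard, div_eq_mul_inv, sq, ENNReal.mul_inv (Or.inl hcard0) (Or.inl hcardtop)]
        push_cast
        ring
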